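/- Let H be a bialgebra over a field k. The linear map λ: H ⊗ H → H ⊗ H defined by λ(h ⊗ g) = h₁ ⊗ h₂g is bijective if and only if H admits an antipode (i.e., H is a Hopf algebra), in which case the inverse is given by λ⁻¹(h ⊗ g) = h₁ ⊗ S(h₂)g. -/
import Mathlib


/-!
STATEMENT 0: Let `H` be a bialgebra over a field `k`.  The linear map
`λ : H ⊗ H → H ⊗ H`, `λ(h ⊗ g) = h₁ ⊗ h₂ g` is bijective if and only if `H`
admits an antipode (i.e. `H` is a Hopf algebra), in which case the inverse is
given by `λ⁻¹(h ⊗ g) = h₁ ⊗ S(h₂) g`.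
-/

open TensorProduct LinearMap

set_option synthInstance.maxHeartbeats 400000
set_option maxHeartbeats 1000000

noncomputable section

variable (k H : Type) [Field k] [Ring H] [Bialgebra k H]

/-- Given a map `f : H → H ⊗ H`, the map `H ⊗ H → H ⊗ H`,
`h ⊗ g ↦ f(h)¹ ⊗ f(h)² g`.  For `f = Δ` this is the Galois map `λ`, and for
`f = (id ⊗ S) ∘ Δ` it is its claimed inverse. -/
def lamAux (f : H →ₗ[k] H ⊗[k] H) : H ⊗[k] H →ₗ[k] H ⊗[k] H :=
  (lTensor H (mul' k H)) ∘ₗ (TensorProduct.assoc k H H H).toLinearMap ∘ₗ (rTensor H f)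

/-- The map `λ(h ⊗ g) = h₁ ⊗ h₂ g`. -/
def lam : H ⊗[k] H →ₗ[k] H ⊗[k] H := lamAux k H Coalgebra.comul

/-- `S` is an antipode for the bialgebra `H`:
`S(h₁) h₂ = ε(h) 1 = h₁ S(h₂)`. -/
def IsAntipode (S : H →ₗ[k] H) : Prop :=
  (mul' k H) ∘ₗ (rTensor H S) ∘ₗ Coalgebra.comul
      = (Algebra.linearMap k H) ∘ₗ Coalgebra.counit ∧
  (mul' k H) ∘ₗ (lTensor H S) ∘ₗ Coalgebra.comul
      = (Algebra.linearMap k H) ∘ₗ Coalgebra.counit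

/-! ### Auxiliary lemmas -/

/-- On a pure tensor, `lamAux f (h ⊗ g) = (id ⊗ ·*g) (f h)`. -/
lemma lamAux_tmul (f : H →ₗ[k] H ⊗[k] H) (h g : H) :
    lamAux k H f (h ⊗ₜ[k] g) = lTensor H (mulRight k g) (f h) := by
  simp only [lamAux, coe_comp, LinearEquiv.coe_coe, Function.comp_apply, rTensor_tmul]
  generalize f h = y
  induction y using TensorProduct.induction_on with
  | zero => simp
  | tmul a b => simp
  | add x y hx hy => simp only [add_tmul, map_add, hx, hy]

lemma lamAux_tmul_one (f : H →ₗ[k] H ⊗[k] H) (h : H) :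
    lamAux k H f (h ⊗ₜ[k] 1) = f h := by
  rw [lamAux_tmul]
  generalize f h = y
  induction y using TensorProduct.induction_on with
  | zero => simp
  | tmul a b => simp
  | add x y hx hy => simp only [map_add, hx, hy]

/-- `lamAux f` commutes with right multiplication in the second factor. -/
lemma lamAux_comm (f : H →ₗ[k] H ⊗[k] H) (g : H) (x : H ⊗[k] H) :
    lamAux k H f (lTensor H (mulRight k g) x)
      = lTensor H (mulRight k g) (lamAux k H f x) := by
  induction x using TensorProduct.induction_on with
  | zero => simp
  | tmul h b =>
      simp only [lTensor_tmul, mulRight_apply, lamAux_tmul]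
      generalize f h = y
      induction y using TensorProduct.induction_on with
      | zero => simp
      | tmul a c => simp [mul_assoc]
      | add u v hu hv => simp only [map_add, hu, hv]
  | add u v hu hv => simp only [map_add, hu, hv]

/-- Naturality of the associator for a map in the last factor. -/
lemma assoc_lTensor (f : H →ₗ[k] H) (z : (H ⊗[k] H) ⊗[k] H) :
    (TensorProduct.assoc k H H H) (lTensor (H ⊗[k] H) f z)
      = lTensor H (lTensor H f) ((TensorProduct.assoc k H H H) z) := by
  have : ((TensorProduct.assoc k H H H).toLinearMap ∘ₗ lTensor (H ⊗[k] H) f)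
      = lTensor H (lTensor H f) ∘ₗ (TensorProduct.assoc k H H H).toLinearMap := by
    apply TensorProduct.ext_threefold
    intro a b c
    simp
  exact LinearMap.congr_fun this z

/-- Naturality of the associator for a map in the middle factor. -/
lemma assoc_midTensor (f : H →ₗ[k] H) (z : (H ⊗[k] H) ⊗[k] H) :
    (TensorProduct.assoc k H H H) (rTensor H (lTensor H f) z)
      = lTensor H (rTensor H f) ((TensorProduct.assoc k H H H) z) := by
  have : ((TensorProduct.assoc k H H H).toLinearMap ∘ₗ rTensor H (lTensor H f))
      = lTensor H (rTensor H f) ∘ₗ (TensorProduct.assoc k H H H).toLinearMap := by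
    apply TensorProduct.ext_threefold
    intro a b c
    simp
  exact LinearMap.congr_fun this z

/-- Key computation: if `S` satisfies `S(h₁) h₂ = ε(h) 1`, then
`lamAux ((id ⊗ S) ∘ Δ)` sends `Δ h` to `h ⊗ 1`. -/
lemma mu_comul (S : H →ₗ[k] H)
    (hS : (mul' k H) ∘ₗ (rTensor H S) ∘ₗ Coalgebra.comul
      = (Algebra.linearMap k H) ∘ₗ Coalgebra.counit) (h : H) :
    lamAux k H ((lTensor H S) ∘ₗ Coalgebra.comul) (Coalgebra.comul h)
      = h ⊗ₜ[k] 1 := by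
  have step1 : lamAux k H ((lTensor H S) ∘ₗ Coalgebra.comul) (Coalgebra.comul h)
      = lTensor H (mul' k H) ((TensorProduct.assoc k H H H)
          (rTensor H (lTensor H S)
            (rTensor H Coalgebra.comul (Coalgebra.comul h)))) := by
    simp only [lamAux, coe_comp, LinearEquiv.coe_coe, Function.comp_apply,
      rTensor_comp_apply]
  rw [step1, ← Coalgebra.coassoc_symm_apply, assoc_midTensor,
    LinearEquiv.apply_symm_apply, ← lTensor_comp_apply, ← lTensor_comp_apply,
    comp_assoc, hS, lTensor_comp_apply, Coalgebra.lTensor_counit_comul]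
  simp

/-- Key computation: if `S` satisfies `h₁ S(h₂) = ε(h) 1`, then
`lam` sends `(id ⊗ S)(Δ h)` to `h ⊗ 1`. -/
lemma lam_lTensorS_comul (S : H →ₗ[k] H)
    (hS : (mul' k H) ∘ₗ (lTensor H S) ∘ₗ Coalgebra.comul
      = (Algebra.linearMap k H) ∘ₗ Coalgebra.counit) (h : H) :
    lam k H (lTensor H S (Coalgebra.comul h)) = h ⊗ₜ[k] 1 := by
  have step1 : lam k H (lTensor H S (Coalgebra.comul h))
      = lTensor H (mul' k H) ((TensorProduct.assoc k H H H)
          (lTensor (H ⊗[k] H) S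
            (rTensor H Coalgebra.comul (Coalgebra.comul h)))) := by
    simp only [lam, lamAux, coe_comp, LinearEquiv.coe_coe, Function.comp_apply]
    rw [← comp_apply (rTensor H Coalgebra.comul) (lTensor H S),
      rTensor_comp_lTensor, ← lTensor_comp_rTensor, comp_apply]
  rw [step1, ← Coalgebra.coassoc_symm_apply, assoc_lTensor,
    LinearEquiv.apply_symm_apply, ← lTensor_comp_apply, ← lTensor_comp_apply,
    comp_assoc, hS, lTensor_comp_apply, Coalgebra.lTensor_counit_comul]
  simp

/-- Part 2, first identity. -/
lemma mu_comp_lam (S : H →ₗ[k] H) (hS : IsAntipode k H S) :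
    lamAux k H ((lTensor H S) ∘ₗ Coalgebra.comul) ∘ₗ lam k H = LinearMap.id := by
  apply TensorProduct.ext'
  intro h g
  have hg : (h : H) ⊗ₜ[k] g = lTensor H (mulRight k g) (h ⊗ₜ[k] (1 : H)) := by simp
  calc lamAux k H ((lTensor H S) ∘ₗ Coalgebra.comul) (lam k H (h ⊗ₜ[k] g))
      = lamAux k H ((lTensor H S) ∘ₗ Coalgebra.comul)
          (lTensor H (mulRight k g) (Coalgebra.comul h)) := by
        rw [lam, lamAux_tmul]
    _ = lTensor H (mulRight k g)
          (lamAux k H ((lTensor H S) ∘ₗ Coalgebra.comul) (Coalgebra.comul h)) :=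
        lamAux_comm k H _ g _
    _ = lTensor H (mulRight k g) (h ⊗ₜ[k] (1 : H)) := by rw [mu_comul k H S hS.1]
    _ = h ⊗ₜ[k] g := by simp
    _ = LinearMap.id (h ⊗ₜ[k] g) := rfl

/-- Part 2, second identity. -/
lemma lam_comp_mu (S : H →ₗ[k] H) (hS : IsAntipode k H S) :
    lam k H ∘ₗ lamAux k H ((lTensor H S) ∘ₗ Coalgebra.comul) = LinearMap.id := by
  apply TensorProduct.ext'
  intro h g
  calc lam k H (lamAux k H ((lTensor H S) ∘ₗ Coalgebra.comul) (h ⊗ₜ[k] g))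
      = lam k H (lTensor H (mulRight k g) (lTensor H S (Coalgebra.comul h))) := by
        rw [lamAux_tmul]; rfl
    _ = lTensor H (mulRight k g) (lam k H (lTensor H S (Coalgebra.comul h))) :=
        lamAux_comm k H _ g _
    _ = lTensor H (mulRight k g) (h ⊗ₜ[k] (1 : H)) := by
        rw [lam_lTensorS_comul k H S hS.2]
    _ = h ⊗ₜ[k] g := by simp
    _ = LinearMap.id (h ⊗ₜ[k] g) := rfl

/-! ### Construction of the antipode from bijectivity -/

/-- Contraction with the counit on the left: `h ⊗ g ↦ ε(h) g`. -/
def cL : H ⊗[k] H →ₗ[k] H :=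
  (TensorProduct.lid k H).toLinearMap ∘ₗ rTensor H (Coalgebra.counit)

lemma cL_tmul (a b : H) : cL k H (a ⊗ₜ[k] b) = Coalgebra.counit (R := k) a • b := by
  simp [cL]

lemma cL_comul (h : H) : cL k H (Coalgebra.comul h) = h := by
  simp only [cL, coe_comp, LinearEquiv.coe_coe, Function.comp_apply,
    Coalgebra.rTensor_counit_comul, lid_tmul, one_smul]

lemma cL_mulRight (g : H) (y : H ⊗[k] H) :
    cL k H (lTensor H (mulRight k g) y) = cL k H y * g := by
  induction y using TensorProduct.induction_on with
  | zero => simp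
  | tmul a b => simp [cL_tmul, smul_mul_assoc]
  | add u v hu hv => simp only [map_add, add_mul, hu, hv]

lemma cL_comp_lam : cL k H ∘ₗ lam k H = mul' k H := by
  apply TensorProduct.ext'
  intro h g
  simp only [coe_comp, Function.comp_apply, mul'_apply]
  rw [lam, lamAux_tmul, cL_mulRight, cL_comul]

/-- The comodule-type compatibility of `lam` with `Δ ⊗ id`. -/
lemma comod_lam (x : H ⊗[k] H) :
    (TensorProduct.assoc k H H H) (rTensor H Coalgebra.comul (lam k H x))
      = lTensor H (lam k H)
          ((TensorProduct.assoc k H H H) (rTensor H Coalgebra.comul x)) := by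
  induction x using TensorProduct.induction_on with
  | zero => simp
  | tmul h g =>
      have lhs : (TensorProduct.assoc k H H H)
            (rTensor H Coalgebra.comul (lam k H (h ⊗ₜ[k] g)))
          = lTensor H (lTensor H (mulRight k g))
              (lTensor H Coalgebra.comul (Coalgebra.comul h)) := by
        rw [lam, lamAux_tmul,
          ← comp_apply (rTensor H Coalgebra.comul) (lTensor H (mulRight k g)),
          rTensor_comp_lTensor, ← lTensor_comp_rTensor, comp_apply,
          assoc_lTensor, Coalgebra.coassoc_apply]
      have rhs : ∀ y : H ⊗[k] H,
          lTensor H (lam k H) ((TensorProduct.assoc k H H H) (y ⊗ₜ[k] g))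
            = lTensor H (lTensor H (mulRight k g)) (lTensor H Coalgebra.comul y) := by
        intro y
        induction y using TensorProduct.induction_on with
        | zero => simp
        | tmul a b => simp [lam, lamAux_tmul]
        | add u v hu hv => simp only [add_tmul, map_add, hu, hv]
      rw [lhs, rTensor_tmul, rhs]
  | add u v hu hv => simp only [map_add, hu, hv]

lemma smul_one_tmul (y : H ⊗[k] H) :
    (TensorProduct.assoc k H H H) (y ⊗ₜ[k] (1 : H))
      = lTensor H ((TensorProduct.mk k H H).flip 1) y := by
  induction y using TensorProduct.induction_on with
  | zero => simp
  | tmul a b => simp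
  | add u v hu hv => simp only [add_tmul, map_add, hu, hv]

lemma lTensor_cL_assoc (y : H ⊗[k] H) (b : H) :
    lTensor H (cL k H) ((TensorProduct.assoc k H H H) (y ⊗ₜ[k] b))
      = lTensor H ((LinearMap.toSpanSingleton k H b) ∘ₗ Coalgebra.counit) y := by
  induction y using TensorProduct.induction_on with
  | zero => simp
  | tmul p q => simp [cL_tmul, LinearMap.toSpanSingleton_apply]
  | add u v hu hv => simp only [add_tmul, map_add, hu, hv]

lemma lTensor_cL_assoc_comul (x : H ⊗[k] H) :
    lTensor H (cL k H)
      ((TensorProduct.assoc k H H H) (rTensor H Coalgebra.comul x)) = x := by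
  induction x using TensorProduct.induction_on with
  | zero => simp
  | tmul a b =>
      rw [rTensor_tmul, lTensor_cL_assoc, lTensor_comp_apply,
        Coalgebra.lTensor_counit_comul]
      simp [LinearMap.toSpanSingleton_apply]
  | add u v hu hv => simp only [map_add, hu, hv]

theorem lam_bijective_iff_antipode :
    (Function.Bijective (lam k H) ↔ ∃ S : H →ₗ[k] H, IsAntipode k H S) ∧
    (∀ S : H →ₗ[k] H, IsAntipode k H S →
      lamAux k H ((lTensor H S) ∘ₗ Coalgebra.comul) ∘ₗ lam k H = LinearMap.id ∧
      lam k H ∘ₗ lamAux k H ((lTensor H S) ∘ₗ Coalgebra.comul) = LinearMap.id) := by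
  constructor
  · constructor
    · -- bijective → antipode
      intro hbij
      set e : (H ⊗[k] H) ≃ₗ[k] H ⊗[k] H := LinearEquiv.ofBijective (lam k H) hbij with he
      have he_apply : ∀ x, e x = lam k H x := fun x => rfl
      set T : H ⊗[k] H →ₗ[k] H ⊗[k] H := e.symm.toLinearMap with hT
      have hlamT : ∀ x, lam k H (T x) = x := fun x => e.apply_symm_apply x
      have hTlam : ∀ x, T (lam k H x) = x := fun x => e.symm_apply_apply x
      set β : H →ₗ[k] H ⊗[k] H := T ∘ₗ (TensorProduct.mk k H H).flip 1 with hβ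
      have hβ_apply : ∀ h : H, β h = T (h ⊗ₜ[k] 1) := fun h => rfl
      set S : H →ₗ[k] H := cL k H ∘ₗ β with hS
      -- T commutes with right multiplication
      have hTcomm : ∀ (g : H) (x : H ⊗[k] H),
          T (lTensor H (mulRight k g) x) = lTensor H (mulRight k g) (T x) := by
        intro g x
        apply e.injective
        rw [he_apply, he_apply, hlamT]
        rw [show lam k H (lTensor H (mulRight k g) (T x))
            = lTensor H (mulRight k g) (lam k H (T x)) from lamAux_comm k H _ g _,
          hlamT]
      -- T is lamAux β on pure tensors
      have hTmu : ∀ h g : H, T (h ⊗ₜ[k] g) = lTensor H (mulRight k g) (β h) := by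
        intro h g
        rw [show (h : H) ⊗ₜ[k] g = lTensor H (mulRight k g) (h ⊗ₜ[k] (1:H)) by simp,
          hTcomm, ← hβ_apply]
      -- multiplication kills β
      have hmulβ : ∀ h : H, mul' k H (β h)
          = algebraMap k H (Coalgebra.counit (R := k) h) := by
        intro h
        have := LinearMap.congr_fun (cL_comp_lam k H) (β h)
        simp only [coe_comp, Function.comp_apply] at this
        rw [← this, hβ_apply, hlamT, cL_tmul, Algebra.algebraMap_eq_smul_one]
      -- comodule property of T
      have hcomodT : ∀ x : H ⊗[k] H,
          (TensorProduct.assoc k H H H) (rTensor H Coalgebra.comul (T x))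
            = lTensor H T
                ((TensorProduct.assoc k H H H) (rTensor H Coalgebra.comul x)) := by
        intro x
        have h1 := comod_lam k H (T x)
        rw [hlamT] at h1
        rw [h1, ← lTensor_comp_apply]
        have : T ∘ₗ lam k H = LinearMap.id := by
          apply LinearMap.ext; intro y; exact hTlam y
        rw [this, lTensor_id, id_coe, id_eq]
      -- the key identity : β = (id ⊗ S) ∘ Δ
      have hβS : ∀ h : H, lTensor H S (Coalgebra.comul h) = β h := by
        intro h
        have h2 : lTensor H β (Coalgebra.comul h)
            = (TensorProduct.assoc k H H H)
                (rTensor H Coalgebra.comul (β h)) := by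
          rw [hβ_apply, hcomodT]
          rw [rTensor_tmul, smul_one_tmul, ← lTensor_comp_apply]
        have h3 : lTensor H S (Coalgebra.comul h)
            = lTensor H (cL k H) (lTensor H β (Coalgebra.comul h)) := by
          rw [hS, ← lTensor_comp_apply]
        rw [h3, h2, lTensor_cL_assoc_comul]
      refine ⟨S, ?_, ?_⟩
      · -- S(h₁) h₂ = ε(h) 1
        apply LinearMap.ext
        intro h
        have q4 : ∀ x : H ⊗[k] H, cL k H (T x) = mul' k H (rTensor H S x) := by
          intro x
          induction x using TensorProduct.induction_on with
          | zero => simp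
          | tmul a b =>
              rw [hTmu, cL_mulRight, rTensor_tmul, mul'_apply, hS]
              rfl
          | add u v hu hv => simp only [map_add, hu, hv]
        simp only [coe_comp, Function.comp_apply]
        rw [← q4]
        have : Coalgebra.comul (R := k) h = lam k H (h ⊗ₜ[k] 1) := by
          rw [lam, lamAux_tmul_one]
        rw [this, hTlam, cL_tmul, Algebra.linearMap_apply,
          Algebra.algebraMap_eq_smul_one]
      · -- h₁ S(h₂) = ε(h) 1
        apply LinearMap.ext
        intro h
        simp only [coe_comp, Function.comp_apply]
        rw [hβS, hmulβ, Algebra.linearMap_apply]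
    · -- antipode → bijective
      rintro ⟨S, hSa⟩
      have h1 := mu_comp_lam k H S hSa
      have h2 := lam_comp_mu k H S hSa
      constructor
      · intro x y hxy
        have := congrArg (lamAux k H ((lTensor H S) ∘ₗ Coalgebra.comul)) hxy
        rwa [← comp_apply, h1, ← comp_apply, h1, id_coe, id_eq, id_eq] at this
      · intro y
        refine ⟨lamAux k H ((lTensor H S) ∘ₗ Coalgebra.comul) y, ?_⟩
        have := LinearMap.congr_fun h2 y
        simpa using this
  · intro S hSa
    exact ⟨mu_comp_lam k H S hSa, lam_comp_mu k H S hSa⟩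

end
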